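/- Let ρ > 0, u ∈ ℝ², T > 0, and let 𝒯 be a real symmetric positive definite 2×2 matrix with tr(𝒯) = 2T. Let 𝒢(v) = (ρ/√(det(2π𝒯))) exp(−(1/2)(v−u)·𝒯⁻¹(v−u)) be the anisotropic Gaussian and M = M[ρ,u,T] the 2D Maxwellian, and let Π_M be the 2D projection operator associated with M. Then the projection of the Gaussian onto the nullspace of the collision operator is the Maxwellian: Π_M[𝒢] = M. -/

import Mathlib

open MeasureTheory Real Matrix

/-- The 2D Maxwellian with density `ρ`, bulk velocity `u ∈ ℝ²`, and temperature `T`. -/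
noncomputable def maxwellian2 (ρ : ℝ) (u : ℝ × ℝ) (T : ℝ) (v : ℝ × ℝ) : ℝ :=
  ρ / (2 * Real.pi * T) *
    Real.exp (-((v.1 - u.1) ^ 2 + (v.2 - u.2) ^ 2) / (2 * T))

/-- The anisotropic Gaussian with density `ρ`, bulk velocity `u ∈ ℝ²`,
and (modified) temperature tensor `𝒯`. -/
noncomputable def anisoGaussian (ρ : ℝ) (u : ℝ × ℝ)
    (𝒯 : Matrix (Fin 2) (Fin 2) ℝ) (v : ℝ × ℝ) : ℝ :=
  ρ / Real.sqrt (((2 * Real.pi) • 𝒯).det) *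
    Real.exp (-(1 / 2) *
      (![v.1 - u.1, v.2 - u.2] ⬝ᵥ (𝒯⁻¹ *ᵥ ![v.1 - u.1, v.2 - u.2])))

/-- The 2D micro-macro projection operator `Π_M` associated with the
Maxwellian `M[ρ,u,T]`. -/
noncomputable def projMax2 (ρ : ℝ) (u : ℝ × ℝ) (T : ℝ)
    (F : ℝ × ℝ → ℝ) (v : ℝ × ℝ) : ℝ :=
  ((1 / ρ) * (∫ w : ℝ × ℝ, F w)
    + ((v.1 - u.1) / Real.sqrt T) *
        ((1 / ρ) * ∫ w : ℝ × ℝ, ((w.1 - u.1) / Real.sqrt T) * F w)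
    + ((v.2 - u.2) / Real.sqrt T) *
        ((1 / ρ) * ∫ w : ℝ × ℝ, ((w.2 - u.2) / Real.sqrt T) * F w)
    + (((v.1 - u.1) ^ 2 + (v.2 - u.2) ^ 2) / (2 * T) - 1) *
        ((1 / ρ) * ∫ w : ℝ × ℝ,
          (((w.1 - u.1) ^ 2 + (w.2 - u.2) ^ 2) / (2 * T) - 1) * F w))
  * maxwellian2 ρ u T v


namespace ProjMax2Aux

lemma aux_integral_odd (b : ℝ) : ∫ x : ℝ, x * Real.exp (-b * x ^ 2) = 0 := by
  have h := integral_neg_eq_self (fun x : ℝ => x * Real.exp (-b * x ^ 2)) volume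
  simp only [neg_sq, neg_mul] at h
  rw [integral_neg] at h
  simp only [neg_mul]
  linarith

lemma aux_integrable_sq {b : ℝ} (hb : 0 < b) :
    Integrable (fun x : ℝ => x ^ 2 * Real.exp (-b * x ^ 2)) := by
  have h := (integrable_exp_neg_mul_sq (b := b / 2) (by positivity)).const_mul (2 / b)
  refine h.mono' (Continuous.aestronglyMeasurable (by fun_prop)) ?_
  filter_upwards with x
  rw [Real.norm_of_nonneg (by positivity)]
  have hx : x ^ 2 ≤ 2 / b * Real.exp (b / 2 * x ^ 2) := by
    have h1 := Real.add_one_le_exp (b / 2 * x ^ 2)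
    have h3 : 2 / b * (b / 2 * x ^ 2 + 1) = x ^ 2 + 2 / b := by field_simp
    have h4 := mul_le_mul_of_nonneg_left h1 (by positivity : (0:ℝ) ≤ 2 / b)
    have h5 : (0:ℝ) < 2 / b := by positivity
    nlinarith
  have e : Real.exp (b / 2 * x ^ 2) * Real.exp (-b * x ^ 2) = Real.exp (-(b / 2) * x ^ 2) := by
    rw [← Real.exp_add]; ring_nf
  calc x ^ 2 * Real.exp (-b * x ^ 2)
      ≤ 2 / b * Real.exp (b / 2 * x ^ 2) * Real.exp (-b * x ^ 2) :=
        mul_le_mul_of_nonneg_right hx (Real.exp_pos _).le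
    _ = 2 / b * Real.exp (-(b / 2) * x ^ 2) := by rw [mul_assoc, e]

lemma aux_integral_sq {b : ℝ} (hb : 0 < b) :
    ∫ x : ℝ, x ^ 2 * Real.exp (-b * x ^ 2) = Real.sqrt (π / b) / (2 * b) := by
  have hu : ∀ x : ℝ, HasDerivAt (fun y : ℝ => y) ((fun _ : ℝ => (1:ℝ)) x) x :=
    fun x => hasDerivAt_id x
  have hv : ∀ x : ℝ, HasDerivAt (fun y : ℝ => -(1 / (2 * b)) * Real.exp (-b * y ^ 2))
      ((fun x : ℝ => x * Real.exp (-b * x ^ 2)) x) x := by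
    intro x
    have h1 : HasDerivAt (fun y : ℝ => -b * y ^ 2) (-b * (2 * x)) x := by
      simpa using (hasDerivAt_pow 2 x).const_mul (-b)
    have h2 := h1.exp.const_mul (-(1 / (2 * b)))
    refine h2.congr_deriv ?_
    field_simp
  have e1 : ((fun y : ℝ => y) * fun x : ℝ => x * Real.exp (-b * x ^ 2))
      = fun x : ℝ => x ^ 2 * Real.exp (-b * x ^ 2) := by
    funext x; simp [Pi.mul_apply]; ring
  have e2 : ((fun _ : ℝ => (1:ℝ)) * fun y : ℝ => -(1 / (2 * b)) * Real.exp (-b * y ^ 2))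
      = fun x : ℝ => -(1 / (2 * b)) * Real.exp (-b * x ^ 2) := by
    funext x; simp
  have e3 : ((fun y : ℝ => y) * fun y : ℝ => -(1 / (2 * b)) * Real.exp (-b * y ^ 2))
      = fun x : ℝ => -(1 / (2 * b)) * (x * Real.exp (-b * x ^ 2)) := by
    funext x; simp [Pi.mul_apply]; ring
  have i1 : Integrable ((fun y : ℝ => y) * fun x : ℝ => x * Real.exp (-b * x ^ 2)) := by
    rw [e1]; exact aux_integrable_sq hb
  have i2 : Integrable ((fun _ : ℝ => (1:ℝ)) * fun y : ℝ => -(1 / (2 * b)) * Real.exp (-b * y ^ 2)) := by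
    rw [e2]; exact (integrable_exp_neg_mul_sq hb).const_mul _
  have i3 : Integrable ((fun y : ℝ => y) * fun y : ℝ => -(1 / (2 * b)) * Real.exp (-b * y ^ 2)) := by
    rw [e3]; exact (integrable_mul_exp_neg_mul_sq hb).const_mul _
  have key := integral_mul_deriv_eq_deriv_mul_of_integrable (fun x _ => hu x) (fun x _ => hv x) i1 i2 i3
  have lhs : ∫ x : ℝ, x ^ 2 * Real.exp (-b * x ^ 2)
      = ∫ x : ℝ, (fun y : ℝ => y) x * ((fun x : ℝ => x * Real.exp (-b * x ^ 2)) x) := by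
    congr 1; funext x; simp; ring
  rw [lhs, key]
  have : ∫ x : ℝ, (fun _ : ℝ => (1:ℝ)) x * ((fun y : ℝ => -(1 / (2 * b)) * Real.exp (-b * y ^ 2)) x)
      = -(1 / (2 * b)) * ∫ x : ℝ, Real.exp (-b * x ^ 2) := by
    simp only [one_mul]
    exact integral_const_mul _ _
  rw [this, integral_gaussian]
  ring

lemma aux_prod_mul (f g : ℝ → ℝ) :
    ∫ p : ℝ × ℝ, f p.1 * g p.2 = (∫ x, f x) * ∫ y, g y := by
  rw [Measure.volume_eq_prod]; exact integral_prod_mul f g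

lemma aux_prod_integrable {f g : ℝ → ℝ} (hf : Integrable f) (hg : Integrable g) :
    Integrable (fun p : ℝ × ℝ => f p.1 * g p.2) := by
  rw [Measure.volume_eq_prod]; exact hf.mul_prod hg

def shearHomeo (k : ℝ) : ℝ × ℝ ≃ₜ ℝ × ℝ where
  toFun p := (p.1 + k * p.2, p.2)
  invFun p := (p.1 - k * p.2, p.2)
  left_inv p := by simp
  right_inv p := by simp
  continuous_toFun := by fun_prop
  continuous_invFun := by fun_prop

lemma measurePreserving_shear (k : ℝ) :
    MeasurePreserving (fun p : ℝ × ℝ => (p.1 + k * p.2, p.2)) volume volume := by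
  have h1 : MeasurePreserving (fun q : ℝ × ℝ => (q.1, q.2 + k * q.1))
      ((volume : Measure ℝ).prod volume) (volume.prod volume) :=
    MeasurePreserving.skew_product (g := fun a c => c + k * a) (MeasurePreserving.id volume)
      (measurable_snd.add (measurable_fst.const_mul k))
      (Filter.Eventually.of_forall fun a => map_add_right_eq_self volume (k * a))
  have hswap : MeasurePreserving (Prod.swap : ℝ × ℝ → ℝ × ℝ)
      ((volume : Measure ℝ).prod volume) (volume.prod volume) :=
    Measure.measurePreserving_swap
  have h2 := hswap.comp (h1.comp hswap)
  have he : (Prod.swap ∘ (fun q : ℝ × ℝ => (q.1, q.2 + k * q.1)) ∘ Prod.swap)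
      = fun p : ℝ × ℝ => (p.1 + k * p.2, p.2) := by
    funext p; simp [Function.comp, Prod.swap]
  rw [he] at h2
  rw [Measure.volume_eq_prod]
  exact h2

lemma aux_shear (k : ℝ) (f : ℝ × ℝ → ℝ) :
    ∫ p : ℝ × ℝ, f (p.1 + k * p.2, p.2) = ∫ p : ℝ × ℝ, f p :=
  (measurePreserving_shear k).integral_comp (shearHomeo k).measurableEmbedding f

lemma aux_translate (φ : ℝ × ℝ → ℝ) (u : ℝ × ℝ) :
    ∫ w : ℝ × ℝ, φ (w.1 - u.1, w.2 - u.2) = ∫ w : ℝ × ℝ, φ w :=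
  integral_sub_right_eq_self (μ := volume) φ u

lemma reduceI (u : ℝ × ℝ) (k : ℝ) (φ : ℝ × ℝ → ℝ) :
    (∫ w : ℝ × ℝ, φ (w.1 - u.1, w.2 - u.2)) = ∫ p : ℝ × ℝ, φ (p.1 + k * p.2, p.2) :=
  (aux_translate φ u).trans (aux_shear k φ).symm

lemma aux_sym (𝒯 : Matrix (Fin 2) (Fin 2) ℝ) (h𝒯 : 𝒯.PosDef) : 𝒯 1 0 = 𝒯 0 1 := by
  have h := congrFun (congrFun h𝒯.1 1) 0
  simpa [Matrix.conjTranspose_apply] using h.symm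

lemma aux_entry00 (𝒯 : Matrix (Fin 2) (Fin 2) ℝ) (h𝒯 : 𝒯.PosDef) : 0 < 𝒯 0 0 := by
  have h := (posDef_iff_dotProduct_mulVec.mp h𝒯).2 (x := ![1, 0]) (by
    intro h
    have := congrFun h 0
    simp at this)
  simpa [dotProduct, Matrix.mulVec, Fin.sum_univ_two] using h

lemma aux_entry11 (𝒯 : Matrix (Fin 2) (Fin 2) ℝ) (h𝒯 : 𝒯.PosDef) : 0 < 𝒯 1 1 := by
  have h := (posDef_iff_dotProduct_mulVec.mp h𝒯).2 (x := ![0, 1]) (by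
    intro h
    have := congrFun h 1
    simp at this)
  simpa [dotProduct, Matrix.mulVec, Fin.sum_univ_two] using h

lemma aux_matrix_eq (𝒯 : Matrix (Fin 2) (Fin 2) ℝ) (hsym : 𝒯 1 0 = 𝒯 0 1) :
    𝒯 = !![𝒯 0 0, 𝒯 0 1; 𝒯 0 1, 𝒯 1 1] := by
  ext i j
  fin_cases i <;> fin_cases j <;> simp [hsym]

lemma aux_inv2 (a b c : ℝ) (hD : a * c - b * b ≠ 0) :
    (!![a, b; b, c])⁻¹ = (a * c - b * b)⁻¹ • !![c, -b; -b, a] := by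
  apply Matrix.inv_eq_right_inv
  ext i j
  fin_cases i <;> fin_cases j <;>
    (simp [Matrix.mul_apply, Fin.sum_univ_two, Matrix.smul_apply, ← sq] at hD ⊢; field_simp; ring)

lemma aux_det2 (a b c : ℝ) : (!![a, b; b, c]).det = a * c - b * b := by
  simp [Matrix.det_fin_two]

lemma aux_quad (a b c x y : ℝ) (hD : a * c - b * b ≠ 0) :
    ![x, y] ⬝ᵥ (((a * c - b * b)⁻¹ • !![c, -b; -b, a]) *ᵥ ![x, y])
      = (c * x ^ 2 - 2 * b * x * y + a * y ^ 2) / (a * c - b * b) := by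
  simp [dotProduct, Matrix.mulVec, Fin.sum_univ_two, Matrix.smul_apply]
  field_simp
  ring

lemma aux_sqrt_det (𝒯 : Matrix (Fin 2) (Fin 2) ℝ) (hd : 0 ≤ 𝒯.det) :
    Real.sqrt (((2 * π) • 𝒯).det) = 2 * π * Real.sqrt 𝒯.det := by
  rw [Matrix.det_smul]
  simp only [Fintype.card_fin]
  rw [Real.sqrt_mul (by positivity), Real.sqrt_sq (by positivity)]

lemma moment0 (N β γ : ℝ) :
    ∫ p : ℝ × ℝ, N * (Real.exp (-β * p.1 ^ 2) * Real.exp (-γ * p.2 ^ 2))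
      = N * (Real.sqrt (π / β) * Real.sqrt (π / γ)) := by
  have key : (∫ p : ℝ × ℝ, N * Real.exp (-β * p.1 ^ 2) * Real.exp (-γ * p.2 ^ 2))
      = (∫ x : ℝ, N * Real.exp (-β * x ^ 2)) * ∫ y : ℝ, Real.exp (-γ * y ^ 2) :=
    aux_prod_mul (fun x => N * Real.exp (-β * x ^ 2)) (fun y => Real.exp (-γ * y ^ 2))
  have e : (fun p : ℝ × ℝ => N * (Real.exp (-β * p.1 ^ 2) * Real.exp (-γ * p.2 ^ 2)))
      = fun p : ℝ × ℝ => N * Real.exp (-β * p.1 ^ 2) * Real.exp (-γ * p.2 ^ 2) := by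
    funext p; ring
  rw [e, key, integral_const_mul, integral_gaussian, integral_gaussian]
  ring

lemma moment1 (N k s β γ : ℝ) (hβ : 0 < β) (hγ : 0 < γ) :
    ∫ p : ℝ × ℝ, ((p.1 + k * p.2) / s) * (N * (Real.exp (-β * p.1 ^ 2) * Real.exp (-γ * p.2 ^ 2)))
      = 0 := by
  have i1 : Integrable (fun p : ℝ × ℝ =>
      N / s * (p.1 * Real.exp (-β * p.1 ^ 2)) * Real.exp (-γ * p.2 ^ 2)) :=
    aux_prod_integrable ((integrable_mul_exp_neg_mul_sq hβ).const_mul (N / s))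
      (integrable_exp_neg_mul_sq hγ)
  have i2 : Integrable (fun p : ℝ × ℝ =>
      Real.exp (-β * p.1 ^ 2) * (N * k / s * (p.2 * Real.exp (-γ * p.2 ^ 2)))) :=
    aux_prod_integrable (integrable_exp_neg_mul_sq hβ)
      ((integrable_mul_exp_neg_mul_sq hγ).const_mul (N * k / s))
  have k1 : (∫ p : ℝ × ℝ, N / s * (p.1 * Real.exp (-β * p.1 ^ 2)) * Real.exp (-γ * p.2 ^ 2))
      = (∫ x : ℝ, N / s * (x * Real.exp (-β * x ^ 2))) * ∫ y : ℝ, Real.exp (-γ * y ^ 2) :=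
    aux_prod_mul (fun x => N / s * (x * Real.exp (-β * x ^ 2))) (fun y => Real.exp (-γ * y ^ 2))
  have k2 : (∫ p : ℝ × ℝ, Real.exp (-β * p.1 ^ 2) * (N * k / s * (p.2 * Real.exp (-γ * p.2 ^ 2))))
      = (∫ x : ℝ, Real.exp (-β * x ^ 2)) * ∫ y : ℝ, N * k / s * (y * Real.exp (-γ * y ^ 2)) :=
    aux_prod_mul (fun x => Real.exp (-β * x ^ 2)) (fun y => N * k / s * (y * Real.exp (-γ * y ^ 2)))
  have e : (fun p : ℝ × ℝ => ((p.1 + k * p.2) / s)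
        * (N * (Real.exp (-β * p.1 ^ 2) * Real.exp (-γ * p.2 ^ 2))))
      = fun p : ℝ × ℝ => N / s * (p.1 * Real.exp (-β * p.1 ^ 2)) * Real.exp (-γ * p.2 ^ 2)
          + Real.exp (-β * p.1 ^ 2) * (N * k / s * (p.2 * Real.exp (-γ * p.2 ^ 2))) := by
    funext p; ring
  rw [e, integral_add i1 i2, k1, k2, integral_const_mul, integral_const_mul,
    aux_integral_odd, aux_integral_odd]
  ring

lemma moment2 (N s β γ : ℝ) :
    ∫ p : ℝ × ℝ, (p.2 / s) * (N * (Real.exp (-β * p.1 ^ 2) * Real.exp (-γ * p.2 ^ 2)))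
      = 0 := by
  have k1 : (∫ p : ℝ × ℝ, Real.exp (-β * p.1 ^ 2) * (N / s * (p.2 * Real.exp (-γ * p.2 ^ 2))))
      = (∫ x : ℝ, Real.exp (-β * x ^ 2)) * ∫ y : ℝ, N / s * (y * Real.exp (-γ * y ^ 2)) :=
    aux_prod_mul (fun x => Real.exp (-β * x ^ 2)) (fun y => N / s * (y * Real.exp (-γ * y ^ 2)))
  have e : (fun p : ℝ × ℝ => (p.2 / s)
        * (N * (Real.exp (-β * p.1 ^ 2) * Real.exp (-γ * p.2 ^ 2))))
      = fun p : ℝ × ℝ => Real.exp (-β * p.1 ^ 2) * (N / s * (p.2 * Real.exp (-γ * p.2 ^ 2))) := by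
    funext p; ring
  rw [e, k1, integral_const_mul, aux_integral_odd]
  ring

lemma moment3 (N k T β γ : ℝ) (hβ : 0 < β) (hγ : 0 < γ) :
    ∫ p : ℝ × ℝ, (((p.1 + k * p.2) ^ 2 + p.2 ^ 2) / (2 * T) - 1)
        * (N * (Real.exp (-β * p.1 ^ 2) * Real.exp (-γ * p.2 ^ 2)))
      = N / (2 * T) * (Real.sqrt (π / β) / (2 * β) * Real.sqrt (π / γ))
        + N * (k ^ 2 + 1) / (2 * T) * (Real.sqrt (π / β) * (Real.sqrt (π / γ) / (2 * γ)))
        - N * (Real.sqrt (π / β) * Real.sqrt (π / γ)) := by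
  have i1 : Integrable (fun p : ℝ × ℝ =>
      N / (2 * T) * (p.1 ^ 2 * Real.exp (-β * p.1 ^ 2)) * Real.exp (-γ * p.2 ^ 2)) :=
    aux_prod_integrable ((aux_integrable_sq hβ).const_mul (N / (2 * T)))
      (integrable_exp_neg_mul_sq hγ)
  have i2 : Integrable (fun p : ℝ × ℝ =>
      N * k / T * (p.1 * Real.exp (-β * p.1 ^ 2)) * (p.2 * Real.exp (-γ * p.2 ^ 2))) :=
    aux_prod_integrable ((integrable_mul_exp_neg_mul_sq hβ).const_mul (N * k / T))
      (integrable_mul_exp_neg_mul_sq hγ)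
  have i3 : Integrable (fun p : ℝ × ℝ =>
      Real.exp (-β * p.1 ^ 2) * (N * (k ^ 2 + 1) / (2 * T) * (p.2 ^ 2 * Real.exp (-γ * p.2 ^ 2)))) :=
    aux_prod_integrable (integrable_exp_neg_mul_sq hβ)
      ((aux_integrable_sq hγ).const_mul (N * (k ^ 2 + 1) / (2 * T)))
  have i4 : Integrable (fun p : ℝ × ℝ =>
      -N * Real.exp (-β * p.1 ^ 2) * Real.exp (-γ * p.2 ^ 2)) :=
    aux_prod_integrable ((integrable_exp_neg_mul_sq hβ).const_mul (-N))
      (integrable_exp_neg_mul_sq hγ)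
  have i12 : Integrable (fun p : ℝ × ℝ =>
      N / (2 * T) * (p.1 ^ 2 * Real.exp (-β * p.1 ^ 2)) * Real.exp (-γ * p.2 ^ 2)
        + N * k / T * (p.1 * Real.exp (-β * p.1 ^ 2)) * (p.2 * Real.exp (-γ * p.2 ^ 2))) :=
    i1.add i2
  have i34 : Integrable (fun p : ℝ × ℝ =>
      Real.exp (-β * p.1 ^ 2) * (N * (k ^ 2 + 1) / (2 * T) * (p.2 ^ 2 * Real.exp (-γ * p.2 ^ 2)))
        + -N * Real.exp (-β * p.1 ^ 2) * Real.exp (-γ * p.2 ^ 2)) :=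
    i3.add i4
  have k1 : (∫ p : ℝ × ℝ,
        N / (2 * T) * (p.1 ^ 2 * Real.exp (-β * p.1 ^ 2)) * Real.exp (-γ * p.2 ^ 2))
      = (∫ x : ℝ, N / (2 * T) * (x ^ 2 * Real.exp (-β * x ^ 2))) * ∫ y : ℝ, Real.exp (-γ * y ^ 2) :=
    aux_prod_mul (fun x => N / (2 * T) * (x ^ 2 * Real.exp (-β * x ^ 2)))
      (fun y => Real.exp (-γ * y ^ 2))
  have k2 : (∫ p : ℝ × ℝ,
        N * k / T * (p.1 * Real.exp (-β * p.1 ^ 2)) * (p.2 * Real.exp (-γ * p.2 ^ 2)))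
      = (∫ x : ℝ, N * k / T * (x * Real.exp (-β * x ^ 2))) * ∫ y : ℝ, y * Real.exp (-γ * y ^ 2) :=
    aux_prod_mul (fun x => N * k / T * (x * Real.exp (-β * x ^ 2)))
      (fun y => y * Real.exp (-γ * y ^ 2))
  have k3 : (∫ p : ℝ × ℝ,
        Real.exp (-β * p.1 ^ 2) * (N * (k ^ 2 + 1) / (2 * T) * (p.2 ^ 2 * Real.exp (-γ * p.2 ^ 2))))
      = (∫ x : ℝ, Real.exp (-β * x ^ 2))
          * ∫ y : ℝ, N * (k ^ 2 + 1) / (2 * T) * (y ^ 2 * Real.exp (-γ * y ^ 2)) :=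
    aux_prod_mul (fun x => Real.exp (-β * x ^ 2))
      (fun y => N * (k ^ 2 + 1) / (2 * T) * (y ^ 2 * Real.exp (-γ * y ^ 2)))
  have k4 : (∫ p : ℝ × ℝ, -N * Real.exp (-β * p.1 ^ 2) * Real.exp (-γ * p.2 ^ 2))
      = (∫ x : ℝ, -N * Real.exp (-β * x ^ 2)) * ∫ y : ℝ, Real.exp (-γ * y ^ 2) :=
    aux_prod_mul (fun x => -N * Real.exp (-β * x ^ 2)) (fun y => Real.exp (-γ * y ^ 2))
  have e : (fun p : ℝ × ℝ => (((p.1 + k * p.2) ^ 2 + p.2 ^ 2) / (2 * T) - 1)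
        * (N * (Real.exp (-β * p.1 ^ 2) * Real.exp (-γ * p.2 ^ 2))))
      = fun p : ℝ × ℝ =>
          (N / (2 * T) * (p.1 ^ 2 * Real.exp (-β * p.1 ^ 2)) * Real.exp (-γ * p.2 ^ 2)
            + N * k / T * (p.1 * Real.exp (-β * p.1 ^ 2)) * (p.2 * Real.exp (-γ * p.2 ^ 2)))
          + (Real.exp (-β * p.1 ^ 2)
                * (N * (k ^ 2 + 1) / (2 * T) * (p.2 ^ 2 * Real.exp (-γ * p.2 ^ 2)))
            + -N * Real.exp (-β * p.1 ^ 2) * Real.exp (-γ * p.2 ^ 2)) := by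
    funext p; ring
  rw [e, integral_add i12 i34, integral_add i1 i2, integral_add i3 i4, k1, k2, k3, k4]
  simp only [integral_const_mul]
  rw [aux_integral_sq hβ, aux_integral_sq hγ, aux_integral_odd, aux_integral_odd,
    integral_gaussian, integral_gaussian]
  ring

end ProjMax2Aux

open ProjMax2Aux

theorem projMax2_gaussian_eq_maxwellian (ρ T : ℝ) (u : ℝ × ℝ)
    (𝒯 : Matrix (Fin 2) (Fin 2) ℝ)
    (hρ : 0 < ρ) (hT : 0 < T) (h𝒯 : 𝒯.PosDef) (htr : 𝒯.trace = 2 * T) :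
    ∀ v : ℝ × ℝ, projMax2 ρ u T (anisoGaussian ρ u 𝒯) v = maxwellian2 ρ u T v := by
  have hsym := aux_sym 𝒯 h𝒯
  have hTeq := aux_matrix_eq 𝒯 hsym
  intro v
  rw [hTeq]
  have ha : 0 < 𝒯 0 0 := aux_entry00 𝒯 h𝒯
  have hcc : 0 < 𝒯 1 1 := aux_entry11 𝒯 h𝒯
  have hDpos : 0 < 𝒯 0 0 * 𝒯 1 1 - 𝒯 0 1 * 𝒯 0 1 := by
    have hd := h𝒯.det_pos
    rwa [Matrix.det_fin_two, hsym] at hd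
  have htr2 : 𝒯 0 0 + 𝒯 1 1 = 2 * T := by
    have := htr
    rwa [Matrix.trace_fin_two] at this
  revert htr2 hDpos hcc ha
  generalize 𝒯 0 0 = a
  generalize 𝒯 0 1 = b
  generalize 𝒯 1 1 = c
  intro ha hcc hDpos htr2
  have hT' : T = (a + c) / 2 := by linarith
  subst hT'
  have hDne : (a * c - b * b) ≠ 0 := ne_of_gt hDpos
  have hcne : c ≠ 0 := ne_of_gt hcc
  have hacne : a + c ≠ 0 := by positivity
  have hβ : 0 < (c / (2 * (a * c - b * b))) := by positivity
  have hγ : 0 < (1 / (2 * c)) := by positivity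
  have hG : ∀ w : ℝ × ℝ, anisoGaussian ρ u !![a, b; b, c] w
      = (ρ / (2 * π * Real.sqrt (a * c - b * b))) * (Real.exp (-(c / (2 * (a * c - b * b))) * ((w.1 - u.1) - (b / c) * (w.2 - u.2)) ^ 2)
          * Real.exp (-(1 / (2 * c)) * (w.2 - u.2) ^ 2)) := by
    intro w
    simp only [anisoGaussian]
    rw [aux_sqrt_det _ (by rw [aux_det2]; exact hDpos.le), aux_det2,
      aux_inv2 a b c hDne, aux_quad a b c (w.1 - u.1) (w.2 - u.2) hDne, ← Real.exp_add]
    have harg : -(1 / 2) * ((c * (w.1 - u.1) ^ 2 - 2 * b * (w.1 - u.1) * (w.2 - u.2)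
          + a * (w.2 - u.2) ^ 2) / (a * c - b * b))
        = -(c / (2 * (a * c - b * b))) * ((w.1 - u.1) - (b / c) * (w.2 - u.2)) ^ 2
          + -(1 / (2 * c)) * (w.2 - u.2) ^ 2 := by
      have hD2 : c * a - b ^ 2 ≠ 0 := by rw [sq, mul_comm]; exact hDne
      field_simp
      ring
    rw [harg]
  have h0 : (∫ w : ℝ × ℝ, anisoGaussian ρ u !![a, b; b, c] w) = ρ := by
    have e : (fun w : ℝ × ℝ => anisoGaussian ρ u !![a, b; b, c] w)
        = fun w : ℝ × ℝ => (fun q : ℝ × ℝ =>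
            (ρ / (2 * π * Real.sqrt (a * c - b * b))) * (Real.exp (-(c / (2 * (a * c - b * b))) * (q.1 - (b / c) * q.2) ^ 2)
              * Real.exp (-(1 / (2 * c)) * q.2 ^ 2))) (w.1 - u.1, w.2 - u.2) := by
      funext w; exact hG w
    have red := reduceI u (b / c) (fun q : ℝ × ℝ =>
        (ρ / (2 * π * Real.sqrt (a * c - b * b))) * (Real.exp (-(c / (2 * (a * c - b * b))) * (q.1 - (b / c) * q.2) ^ 2)
          * Real.exp (-(1 / (2 * c)) * q.2 ^ 2)))
    rw [e, red]
    have e2 : (∫ p : ℝ × ℝ, (fun q : ℝ × ℝ =>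
          (ρ / (2 * π * Real.sqrt (a * c - b * b))) * (Real.exp (-(c / (2 * (a * c - b * b))) * (q.1 - (b / c) * q.2) ^ 2)
            * Real.exp (-(1 / (2 * c)) * q.2 ^ 2))) (p.1 + (b / c) * p.2, p.2))
        = ∫ p : ℝ × ℝ, (ρ / (2 * π * Real.sqrt (a * c - b * b))) * (Real.exp (-(c / (2 * (a * c - b * b))) * p.1 ^ 2) * Real.exp (-(1 / (2 * c)) * p.2 ^ 2)) := by
      congr 1; funext p; simp [add_sub_cancel_right]
    rw [e2, moment0]
    rw [← Real.sqrt_mul (by positivity : (0:ℝ) ≤ π / (c / (2 * (a * c - b * b))))]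
    have e3 : π / (c / (2 * (a * c - b * b))) * (π / (1 / (2 * c))) = (2 * π) ^ 2 * (a * c - b * b) := by
      field_simp
    rw [e3, Real.sqrt_mul (by positivity), Real.sqrt_sq (by positivity)]
    have hs : Real.sqrt (a * c - b ^ 2) ≠ 0 := by rw [sq]; positivity
    field_simp

  have h1 : (∫ w : ℝ × ℝ, ((w.1 - u.1) / Real.sqrt ((a + c) / 2))
        * anisoGaussian ρ u !![a, b; b, c] w) = 0 := by
    have e : (fun w : ℝ × ℝ => ((w.1 - u.1) / Real.sqrt ((a + c) / 2))
          * anisoGaussian ρ u !![a, b; b, c] w)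
        = fun w : ℝ × ℝ => (fun q : ℝ × ℝ => (q.1 / Real.sqrt ((a + c) / 2))
            * ((ρ / (2 * π * Real.sqrt (a * c - b * b))) * (Real.exp (-(c / (2 * (a * c - b * b))) * (q.1 - (b / c) * q.2) ^ 2)
              * Real.exp (-(1 / (2 * c)) * q.2 ^ 2)))) (w.1 - u.1, w.2 - u.2) := by
      funext w; rw [hG w]
    have red := reduceI u (b / c) (fun q : ℝ × ℝ => (q.1 / Real.sqrt ((a + c) / 2))
        * ((ρ / (2 * π * Real.sqrt (a * c - b * b))) * (Real.exp (-(c / (2 * (a * c - b * b))) * (q.1 - (b / c) * q.2) ^ 2)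
          * Real.exp (-(1 / (2 * c)) * q.2 ^ 2))))
    rw [e, red]
    have e2 : (∫ p : ℝ × ℝ, (fun q : ℝ × ℝ => (q.1 / Real.sqrt ((a + c) / 2))
          * ((ρ / (2 * π * Real.sqrt (a * c - b * b))) * (Real.exp (-(c / (2 * (a * c - b * b))) * (q.1 - (b / c) * q.2) ^ 2)
            * Real.exp (-(1 / (2 * c)) * q.2 ^ 2)))) (p.1 + (b / c) * p.2, p.2))
        = ∫ p : ℝ × ℝ, ((p.1 + (b / c) * p.2) / Real.sqrt ((a + c) / 2)) * ((ρ / (2 * π * Real.sqrt (a * c - b * b))) * (Real.exp (-(c / (2 * (a * c - b * b))) * p.1 ^ 2) * Real.exp (-(1 / (2 * c)) * p.2 ^ 2))) := by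
      congr 1; funext p; simp [add_sub_cancel_right]
    rw [e2]
    exact moment1 _ _ _ _ _ hβ hγ

  have h2 : (∫ w : ℝ × ℝ, ((w.2 - u.2) / Real.sqrt ((a + c) / 2))
        * anisoGaussian ρ u !![a, b; b, c] w) = 0 := by
    have e : (fun w : ℝ × ℝ => ((w.2 - u.2) / Real.sqrt ((a + c) / 2))
          * anisoGaussian ρ u !![a, b; b, c] w)
        = fun w : ℝ × ℝ => (fun q : ℝ × ℝ => (q.2 / Real.sqrt ((a + c) / 2))
            * ((ρ / (2 * π * Real.sqrt (a * c - b * b))) * (Real.exp (-(c / (2 * (a * c - b * b))) * (q.1 - (b / c) * q.2) ^ 2)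
              * Real.exp (-(1 / (2 * c)) * q.2 ^ 2)))) (w.1 - u.1, w.2 - u.2) := by
      funext w; rw [hG w]
    have red := reduceI u (b / c) (fun q : ℝ × ℝ => (q.2 / Real.sqrt ((a + c) / 2))
        * ((ρ / (2 * π * Real.sqrt (a * c - b * b))) * (Real.exp (-(c / (2 * (a * c - b * b))) * (q.1 - (b / c) * q.2) ^ 2)
          * Real.exp (-(1 / (2 * c)) * q.2 ^ 2))))
    rw [e, red]
    have e2 : (∫ p : ℝ × ℝ, (fun q : ℝ × ℝ => (q.2 / Real.sqrt ((a + c) / 2))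
          * ((ρ / (2 * π * Real.sqrt (a * c - b * b))) * (Real.exp (-(c / (2 * (a * c - b * b))) * (q.1 - (b / c) * q.2) ^ 2)
            * Real.exp (-(1 / (2 * c)) * q.2 ^ 2)))) (p.1 + (b / c) * p.2, p.2))
        = ∫ p : ℝ × ℝ, (p.2 / Real.sqrt ((a + c) / 2)) * ((ρ / (2 * π * Real.sqrt (a * c - b * b))) * (Real.exp (-(c / (2 * (a * c - b * b))) * p.1 ^ 2) * Real.exp (-(1 / (2 * c)) * p.2 ^ 2))) := by
      congr 1; funext p; simp [add_sub_cancel_right]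
    rw [e2]
    exact moment2 _ _ _ _

  have h3 : (∫ w : ℝ × ℝ, (((w.1 - u.1) ^ 2 + (w.2 - u.2) ^ 2) / (2 * ((a + c) / 2)) - 1)
        * anisoGaussian ρ u !![a, b; b, c] w) = 0 := by
    have e : (fun w : ℝ × ℝ => (((w.1 - u.1) ^ 2 + (w.2 - u.2) ^ 2) / (2 * ((a + c) / 2)) - 1)
          * anisoGaussian ρ u !![a, b; b, c] w)
        = fun w : ℝ × ℝ => (fun q : ℝ × ℝ => ((q.1 ^ 2 + q.2 ^ 2) / (2 * ((a + c) / 2)) - 1)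
            * ((ρ / (2 * π * Real.sqrt (a * c - b * b))) * (Real.exp (-(c / (2 * (a * c - b * b))) * (q.1 - (b / c) * q.2) ^ 2)
              * Real.exp (-(1 / (2 * c)) * q.2 ^ 2)))) (w.1 - u.1, w.2 - u.2) := by
      funext w; rw [hG w]
    have red := reduceI u (b / c) (fun q : ℝ × ℝ => ((q.1 ^ 2 + q.2 ^ 2) / (2 * ((a + c) / 2)) - 1)
        * ((ρ / (2 * π * Real.sqrt (a * c - b * b))) * (Real.exp (-(c / (2 * (a * c - b * b))) * (q.1 - (b / c) * q.2) ^ 2)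
          * Real.exp (-(1 / (2 * c)) * q.2 ^ 2))))
    rw [e, red]
    have e2 : (∫ p : ℝ × ℝ, (fun q : ℝ × ℝ => ((q.1 ^ 2 + q.2 ^ 2) / (2 * ((a + c) / 2)) - 1)
          * ((ρ / (2 * π * Real.sqrt (a * c - b * b))) * (Real.exp (-(c / (2 * (a * c - b * b))) * (q.1 - (b / c) * q.2) ^ 2)
            * Real.exp (-(1 / (2 * c)) * q.2 ^ 2)))) (p.1 + (b / c) * p.2, p.2))
        = ∫ p : ℝ × ℝ, (((p.1 + (b / c) * p.2) ^ 2 + p.2 ^ 2) / (2 * ((a + c) / 2)) - 1) * ((ρ / (2 * π * Real.sqrt (a * c - b * b))) * (Real.exp (-(c / (2 * (a * c - b * b))) * p.1 ^ 2) * Real.exp (-(1 / (2 * c)) * p.2 ^ 2))) := by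
      congr 1; funext p; simp [add_sub_cancel_right]
    rw [e2]
    rw [moment3 _ _ _ _ _ hβ hγ]
    have hkey : (1:ℝ) / (2 * ((a + c) / 2)) * (1 / (2 * (c / (2 * (a * c - b * b)))))
        + ((b / c) ^ 2 + 1) / (2 * ((a + c) / 2)) * (1 / (2 * (1 / (2 * c)))) = 1 := by
      field_simp
      ring
    set s1 := Real.sqrt (π / (c / (2 * (a * c - b * b)))) with hs1
    set s2 := Real.sqrt (π / (1 / (2 * c))) with hs2
    linear_combination ((ρ / (2 * π * Real.sqrt (a * c - b * b))) * s1 * s2) * hkey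
  simp only [projMax2, h0, h1, h2, h3]
  have hρne : ρ ≠ 0 := ne_of_gt hρ
  field_simp
  ring
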